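/- In a linear outcome model with two conditionally independent mediators, the IE decomposition is order-invariant: the component attributed to mediator W1 is the same whether W1 is processed first or second in the topological ordering. Specifically, both ordering conventions yield the value Σ_z P(z) Σ_{w1} φ1(w1,z)(P(w1|x1,z) - P(w1|x0,z)) for W1's contribution. -/
import Mathlib

lemma ie_aux {Z W1 W2 : Type*} [Fintype Z] [Fintype W1] [Fintype W2]
    (Pz : Z → ℝ) (d : Z → W1 → ℝ) (hd : ∀ z, ∑ w1, d z w1 = 0)
    (q : Z → W2 → ℝ) (hq : ∀ z, ∑ w2, q z w2 = 1)
    (φ1 : W1 → Z → ℝ) (φ2 : W2 → Z → ℝ) :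
    (∑ z, Pz z * ∑ w1, ∑ w2, (φ1 w1 z + φ2 w2 z) * d z w1 * q z w2)
      = ∑ z, Pz z * ∑ w1, φ1 w1 z * d z w1 := by
  refine Finset.sum_congr rfl fun z _ => ?_
  congr 1
  have : ∀ w1, ∑ w2, (φ1 w1 z + φ2 w2 z) * d z w1 * q z w2
      = φ1 w1 z * d z w1 + d z w1 * ∑ w2, φ2 w2 z * q z w2 := by
    intro w1
    have := hq z
    calc ∑ w2, (φ1 w1 z + φ2 w2 z) * d z w1 * q z w2
        = ∑ w2, (φ1 w1 z * d z w1 * q z w2 + d z w1 * (φ2 w2 z * q z w2)) := by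
          refine Finset.sum_congr rfl fun w2 _ => by ring
      _ = φ1 w1 z * d z w1 * (∑ w2, q z w2) + ∑ w2, d z w1 * (φ2 w2 z * q z w2) := by
          rw [Finset.sum_add_distrib, Finset.mul_sum]
      _ = _ := by rw [this, Finset.mul_sum]; ring
  simp only [this]
  rw [Finset.sum_add_distrib]
  have : ∑ w1, d z w1 * ∑ w2, φ2 w2 z * q z w2
      = (∑ w1, d z w1) * ∑ w2, φ2 w2 z * q z w2 := by rw [Finset.sum_mul]
  rw [this, hd z]
  ring

/-- Order-invariance of the IE decomposition in a linear outcome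
model with two conditionally independent mediators: under either ordering
(W1,W2) or (W2,W1), the component attributed to W1 equals
Σ_z P(z) Σ_{w1} φ1(w1,z)(P(w1|x1,z) - P(w1|x0,z)). -/
theorem ie_component_order_invariant
    {X Z W1 W2 : Type*} [Fintype Z] [Fintype W1] [Fintype W2]
    (x0 x1 : X)
    (Pz : Z → ℝ) (hPz : ∑ z, Pz z = 1)
    (P1 : X → Z → W1 → ℝ) (hP1 : ∀ x z, ∑ w1, P1 x z w1 = 1)
    (P2 : X → Z → W2 → ℝ) (hP2 : ∀ x z, ∑ w2, P2 x z w2 = 1)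
    (φ1 : W1 → Z → ℝ) (φ2 : W2 → Z → ℝ) :
    (∑ z, Pz z * ∑ w1, ∑ w2,
        (φ1 w1 z + φ2 w2 z) * (P1 x1 z w1 - P1 x0 z w1) * P2 x0 z w2)
      = ∑ z, Pz z * ∑ w1, φ1 w1 z * (P1 x1 z w1 - P1 x0 z w1)
    ∧
    (∑ z, Pz z * ∑ w1, ∑ w2,
        (φ1 w1 z + φ2 w2 z) * (P1 x1 z w1 - P1 x0 z w1) * P2 x1 z w2)
      = ∑ z, Pz z * ∑ w1, φ1 w1 z * (P1 x1 z w1 - P1 x0 z w1) := by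
  have hd : ∀ z, ∑ w1, (P1 x1 z w1 - P1 x0 z w1) = 0 := by
    intro z; rw [Finset.sum_sub_distrib, hP1, hP1]; ring
  exact ⟨ie_aux Pz _ hd _ (hP2 x0) φ1 φ2, ie_aux Pz _ hd _ (hP2 x1) φ1 φ2⟩
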